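/- Let U be a unit distribution on the torus grid T_{m,n} with min(m,n) ≥ 5. Then TE(U) ≥ 0 if |U| = 1, TE(U) ≥ (1/2)|U| if 2 ≤ |U| ≤ 3, and TE(U) ≥ (8/5)|U| if |U| ≥ 4. -/

import Mathlib

open Finset

/-- A pebbling move: remove two pebbles from `src`, add one to `tgt`. -/
structure PMove (V : Type*) where
  src : V
  tgt : V

/-- Result of applying one pebbling move to a distribution. -/
def applyMove {V : Type*} [DecidableEq V] (p : V → ℕ) (m : PMove V) : V → ℕ :=
  fun w => if w = m.src then p w - 2 else if w = m.tgt then p w + 1 else p w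

/-- A list of moves is executable: each move goes along an edge and has
two pebbles available at its source. -/
def Executable {V : Type*} [DecidableEq V] (G : SimpleGraph V) :
    (V → ℕ) → List (PMove V) → Prop
  | _, [] => True
  | p, m :: ms => G.Adj m.src m.tgt ∧ 2 ≤ p m.src ∧ Executable G (applyMove p m) ms

/-- The distribution obtained after applying a sequence of moves. -/
def applySeq {V : Type*} [DecidableEq V] (p : V → ℕ) (σ : List (PMove V)) : V → ℕ :=
  σ.foldl applyMove p

/-- `v` is `k`-reachable under `p`. -/
def KReachable {V : Type*} [DecidableEq V] (G : SimpleGraph V) (p : V → ℕ) (k : ℕ) (v : V) :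
    Prop :=
  ∃ σ : List (PMove V), Executable G p σ ∧ k ≤ applySeq p σ v

/-- `v` is reachable under `p`: some pebbling sequence puts a pebble on `v`. -/
def Reachable' {V : Type*} [DecidableEq V] (G : SimpleGraph V) (p : V → ℕ) (v : V) : Prop :=
  KReachable G p 1 v

/-- The maximal number of pebbles that can be moved to `v`. -/
noncomputable def reach {V : Type*} [DecidableEq V] (G : SimpleGraph V) (p : V → ℕ) (v : V) :
    ℕ :=
  sSup {k | KReachable G p k v}

/-- The excess of `v` under `p`. -/
noncomputable def exc {V : Type*} [DecidableEq V] (G : SimpleGraph V) (p : V → ℕ) (v : V) :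
    ℕ :=
  reach G p v - 1

/-- The total excess of `p`. -/
noncomputable def TE {V : Type*} [Fintype V] [DecidableEq V] (G : SimpleGraph V)
    (p : V → ℕ) : ℕ :=
  ∑ v, exc G p v

/-- `p` is solvable: every vertex is reachable. -/
def Solvable {V : Type*} [DecidableEq V] (G : SimpleGraph V) (p : V → ℕ) : Prop :=
  ∀ v, Reachable' G p v

/-- The number of vertices reachable under `p`. -/
noncomputable def cov {V : Type*} [DecidableEq V] (G : SimpleGraph V) (p : V → ℕ) : ℕ :=
  Set.ncard {v | Reachable' G p v}

/-- The number of cooperation vertices of the pair `(p, q)`. -/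
noncomputable def coop {V : Type*} [DecidableEq V] (G : SimpleGraph V) (p q : V → ℕ) : ℕ :=
  Set.ncard {v | Reachable' G (p + q) v ∧ ¬ Reachable' G p v ∧ ¬ Reachable' G q v}

/-- The number of double covered vertices of the pair `(p, q)`. -/
noncomputable def DC {V : Type*} [DecidableEq V] (G : SimpleGraph V) (p q : V → ℕ) : ℕ :=
  Set.ncard {v | Reachable' G p v ∧ Reachable' G q v}

/-- The cooperation excess between `p` and `q`. -/
noncomputable def CE {V : Type*} [Fintype V] [DecidableEq V] (G : SimpleGraph V)
    (p q : V → ℕ) : ℤ :=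
  (TE G (p + q) : ℤ) - TE G p - TE G q

/-- The effect of a pebble placed at `v`. -/
noncomputable def eff {V : Type*} (G : SimpleGraph V) (v : V) : ℚ :=
  ∑ i ∈ Finset.range (G.diam + 1), (1 / 2 : ℚ) ^ i * (Set.ncard {u | G.dist v u = i})

/-- The optimal pebbling number of `G`. -/
noncomputable def piOpt {V : Type*} [Fintype V] [DecidableEq V] (G : SimpleGraph V) : ℕ :=
  sInf {k | ∃ p : V → ℕ, Solvable G p ∧ ∑ v, p v = k}

-- sum nonincreasing
lemma sum_applyMove_le {V : Type*} [Fintype V] [DecidableEq V] (p : V → ℕ) (m : PMove V)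
    (h : 2 ≤ p m.src) : ∑ w, applyMove p m w ≤ ∑ w, p w := by
  have key : ∀ w, applyMove p m w + (if w = m.src then 2 else 0)
      ≤ p w + (if w = m.tgt then 1 else 0) := by
    intro w
    simp only [applyMove]
    by_cases h1 : w = m.src
    · subst h1
      simp only [if_pos rfl]
      split_ifs <;> omega
    · rw [if_neg h1, if_neg h1]
      split_ifs <;> omega
  have hsum := Finset.sum_le_sum (fun w (_ : w ∈ Finset.univ) => key w)
  rw [Finset.sum_add_distrib, Finset.sum_add_distrib,
    Finset.sum_ite_eq' Finset.univ m.src (fun _ => 2),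
    Finset.sum_ite_eq' Finset.univ m.tgt (fun _ => 1)] at hsum
  simp only [Finset.mem_univ, if_true] at hsum
  omega

lemma sum_applySeq_le {V : Type*} [Fintype V] [DecidableEq V] (G : SimpleGraph V)
    (σ : List (PMove V)) : ∀ p : V → ℕ, Executable G p σ →
    ∑ w, applySeq p σ w ≤ ∑ w, p w := by
  induction σ with
  | nil => intro p _; simp [applySeq]
  | cons m ms ih =>
    intro p hp
    obtain ⟨_, h2, hex⟩ := hp
    calc ∑ w, applySeq p (m :: ms) w = ∑ w, applySeq (applyMove p m) ms w := rfl
      _ ≤ ∑ w, applyMove p m w := ih _ hex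
      _ ≤ ∑ w, p w := sum_applyMove_le p m h2

lemma reach_le {V : Type*} [Fintype V] [DecidableEq V] (G : SimpleGraph V)
    (p : V → ℕ) (v : V) {k : ℕ} (h : KReachable G p k v) : k ≤ reach G p v := by
  apply le_csSup
  · refine ⟨∑ w, p w, fun x hx => ?_⟩
    obtain ⟨σ, hex, hle⟩ := hx
    calc x ≤ applySeq p σ v := hle
      _ ≤ ∑ w, applySeq p σ w := Finset.single_le_sum (fun _ _ => Nat.zero_le _) (mem_univ v)
      _ ≤ ∑ w, p w := sum_applySeq_le G σ p hex
  · exact h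

-- replicate lemma
lemma exec_replicate {V : Type*} [DecidableEq V] (G : SimpleGraph V) {a c : V}
    (hadj : G.Adj a c) :
    ∀ (t : ℕ) (p : V → ℕ), 2 * t ≤ p a →
      Executable G p (List.replicate t ⟨a, c⟩) ∧
      p c + t ≤ applySeq p (List.replicate t ⟨a, c⟩) c := by
  have hne : c ≠ a := (G.ne_of_adj hadj).symm
  intro t
  induction t with
  | zero => intro p _; simp [Executable, applySeq]
  | succ t ih =>
    intro p hp
    have h2 : 2 ≤ p a := by omega
    have step : applyMove p ⟨a, c⟩ a = p a - 2 := by simp [applyMove]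
    have stepc : applyMove p ⟨a, c⟩ c = p c + 1 := by simp [applyMove, hne]
    have hrec := ih (applyMove p ⟨a, c⟩) (by rw [step]; omega)
    rw [List.replicate_succ]
    refine ⟨⟨hadj, h2, hrec.1⟩, ?_⟩
    have : applySeq p (⟨a, c⟩ :: List.replicate t ⟨a, c⟩) c
        = applySeq (applyMove p ⟨a, c⟩) (List.replicate t ⟨a, c⟩) c := rfl
    rw [this]
    have := hrec.2
    omega

open Fin.CommRing in
lemma fin_val_one {m : ℕ} [NeZero m] (hm : 5 ≤ m) : ((1 : Fin m)).val = 1 := by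
  have h : ((1 : ℕ) : Fin m).val = 1 := Fin.val_cast_of_lt (by omega)
  simpa using h

open Fin.CommRing in
lemma fin_val_two {m : ℕ} [NeZero m] (hm : 5 ≤ m) : ((2 : Fin m)).val = 2 := by
  have h : ((2 : ℕ) : Fin m).val = 2 := Fin.val_cast_of_lt (by omega)
  have h2 : ((2 : ℕ) : Fin m) = (2 : Fin m) := by push_cast; rfl
  rw [h2] at h; exact h

open Fin.CommRing in
lemma cyc_adj_succ {m : ℕ} [NeZero m] (hm : 5 ≤ m) (a : Fin m) :
    (SimpleGraph.cycleGraph m).Adj a (a + 1) := by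
  rw [SimpleGraph.cycleGraph_adj']
  right
  have h : a + 1 - a = 1 := by ring
  rw [h, fin_val_one hm]

open Fin.CommRing in
lemma cyc_adj_pred {m : ℕ} [NeZero m] (hm : 5 ≤ m) (a : Fin m) :
    (SimpleGraph.cycleGraph m).Adj a (a - 1) := by
  rw [SimpleGraph.cycleGraph_adj']
  left
  have h : a - (a - 1) = 1 := by ring
  rw [h, fin_val_one hm]

open Fin.CommRing in
lemma fin_succ_ne_pred {m : ℕ} [NeZero m] (hm : 5 ≤ m) (a : Fin m) : a + 1 ≠ a - 1 := by
  intro h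
  have h2 : (2 : Fin m) = 0 := by linear_combination h
  have h3 := congrArg Fin.val h2
  rw [fin_val_two hm] at h3
  simp at h3

/-- For a unit `U` of size `b` on the torus grid `C_m □ C_n` (`m, n ≥ 5`):
`TE(U) ≥ 0` if `b = 1`, `TE(U) ≥ (1/2)b` if `2 ≤ b ≤ 3`, and `TE(U) ≥ (8/5)b` if
`b ≥ 4`. -/
theorem stmt16 (m n : ℕ) (hm : 5 ≤ m) (hn : 5 ≤ n) (u : Fin m × Fin n)
    (b : ℕ) (hb : 1 ≤ b) (U : Fin m × Fin n → ℕ)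
    (hU : U = fun w => if w = u then b else 0) :
    (b = 1 →
      (0 : ℚ) ≤ (TE ((SimpleGraph.cycleGraph m).boxProd (SimpleGraph.cycleGraph n)) U : ℚ)) ∧
    (2 ≤ b → b ≤ 3 →
      (1 / 2 : ℚ) * b
        ≤ (TE ((SimpleGraph.cycleGraph m).boxProd (SimpleGraph.cycleGraph n)) U : ℚ)) ∧
    (4 ≤ b →
      (8 / 5 : ℚ) * b
        ≤ (TE ((SimpleGraph.cycleGraph m).boxProd (SimpleGraph.cycleGraph n)) U : ℚ)) := by
  haveI : NeZero m := ⟨by omega⟩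
  haveI : NeZero n := ⟨by omega⟩
  set G := (SimpleGraph.cycleGraph m).boxProd (SimpleGraph.cycleGraph n) with hG
  have hUu : U u = b := by rw [hU]; simp
  -- reach at u is at least b
  have hreachu : b ≤ reach G U u :=
    reach_le G U u ⟨[], trivial, by simpa [applySeq] using hUu.ge⟩
  have hexcu : b - 1 ≤ exc G U u := by unfold exc; omega
  have hTEu : exc G U u ≤ TE G U :=
    Finset.single_le_sum (fun _ _ => Nat.zero_le _) (Finset.mem_univ u)
  refine ⟨fun _ => by positivity, fun h2 h3 => ?_, fun h4 => ?_⟩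
  · -- middle case
    have hTE : b - 1 ≤ TE G U := le_trans hexcu hTEu
    have hc : ((b : ℚ) - 1) ≤ (TE G U : ℚ) := by
      have : ((b - 1 : ℕ) : ℚ) ≤ (TE G U : ℚ) := by exact_mod_cast hTE
      rw [Nat.cast_sub hb] at this; simpa using this
    have hb3 : (b : ℚ) ≤ 3 := by exact_mod_cast h3
    have hb2 : (2 : ℚ) ≤ (b : ℚ) := by exact_mod_cast h2
    linarith
  · -- big case : use the four neighbors
    set v1 : Fin m × Fin n := (u.1 + 1, u.2) with hv1
    set v2 : Fin m × Fin n := (u.1 - 1, u.2) with hv2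
    set v3 : Fin m × Fin n := (u.1, u.2 + 1) with hv3
    set v4 : Fin m × Fin n := (u.1, u.2 - 1) with hv4
    have hadj1 : G.Adj u v1 := Or.inl ⟨cyc_adj_succ hm u.1, rfl⟩
    have hadj2 : G.Adj u v2 := Or.inl ⟨cyc_adj_pred hm u.1, rfl⟩
    have hadj3 : G.Adj u v3 := Or.inr ⟨cyc_adj_succ hn u.2, rfl⟩
    have hadj4 : G.Adj u v4 := Or.inr ⟨cyc_adj_pred hn u.2, rfl⟩
    -- each neighbor receives b/2 pebbles
    have hreach : ∀ v : Fin m × Fin n, G.Adj u v → b / 2 ≤ reach G U v := by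
      intro v hadj
      have hvne : v ≠ u := (G.ne_of_adj hadj).symm
      have hUv : U v = 0 := by rw [hU]; simp [hvne]
      have hrep := exec_replicate G hadj (b / 2) U (by rw [hUu]; omega)
      exact reach_le G U v ⟨List.replicate (b / 2) ⟨u, v⟩, hrep.1, by
        have := hrep.2; omega⟩
    have hexc : ∀ v : Fin m × Fin n, G.Adj u v → b / 2 - 1 ≤ exc G U v := by
      intro v hadj
      have := hreach v hadj
      unfold exc; omega
    -- distinctness
    have h01 : u ≠ v1 := G.ne_of_adj hadj1
    have h02 : u ≠ v2 := G.ne_of_adj hadj2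
    have h03 : u ≠ v3 := G.ne_of_adj hadj3
    have h04 : u ≠ v4 := G.ne_of_adj hadj4
    have hs1 : u.1 + 1 ≠ u.1 := (cyc_adj_succ hm u.1).ne'
    have hp1 : u.1 - 1 ≠ u.1 := (cyc_adj_pred hm u.1).ne'
    have h12 : v1 ≠ v2 := fun h => fin_succ_ne_pred hm u.1 (congrArg Prod.fst h)
    have h13 : v1 ≠ v3 := fun h => hs1 (congrArg Prod.fst h)
    have h14 : v1 ≠ v4 := fun h => hs1 (congrArg Prod.fst h)
    have h23 : v2 ≠ v3 := fun h => hp1 (congrArg Prod.fst h)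
    have h24 : v2 ≠ v4 := fun h => hp1 (congrArg Prod.fst h)
    have h34 : v3 ≠ v4 := fun h => fin_succ_ne_pred hn u.2 (congrArg Prod.snd h)
    have hsum : ∑ v ∈ ({u, v1, v2, v3, v4} : Finset (Fin m × Fin n)), exc G U v
        = exc G U u + (exc G U v1 + (exc G U v2 + (exc G U v3 + exc G U v4))) := by
      rw [Finset.sum_insert (by simp [h01, h02, h03, h04]),
        Finset.sum_insert (by simp [h12, h13, h14]),
        Finset.sum_insert (by simp [h23, h24]),
        Finset.sum_insert (by simp [h34]), Finset.sum_singleton]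
    have hTEge : exc G U u + (exc G U v1 + (exc G U v2 + (exc G U v3 + exc G U v4)))
        ≤ TE G U := by
      rw [← hsum]
      exact Finset.sum_le_sum_of_subset (Finset.subset_univ _)
    have he1 := hexc v1 hadj1
    have he2 := hexc v2 hadj2
    have he3 := hexc v3 hadj3
    have he4 := hexc v4 hadj4
    have hnat : 8 * b ≤ 5 * TE G U := by omega
    have hc : (8 : ℚ) * b ≤ 5 * (TE G U : ℚ) := by exact_mod_cast hnat
    linarith
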